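/- arXiv:1308.5239 — 3 statements merged into one kernel-verified Lean document; each statement's English description precedes it below -/
import Mathlib

section
/- Let U be a k-dimensional linear subspace of the vector space F_2^n over F_2, and equip F_2^n with the product measure where each coordinate is Bernoulli(p) for some p in (0,1). Then the probability of U is at least (min{p,1-p})^{n-k}. -/
open scoped Classical BigOperators
open Filter

noncomputable section

/-- Hamming weight of a binary vector. -/
def hw {n : ℕ} (x : Fin n → ZMod 2) : ℕ :=
  (Finset.univ.filter fun i => x i ≠ 0).card

/-- Probability mass of a vector under the product Bernoulli(p) measure. -/
def pmass (p : ℝ) {n : ℕ} (x : Fin n → ZMod 2) : ℝ :=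
  p ^ hw x * (1 - p) ^ (n - hw x)

/-- Probability of a set under the product Bernoulli(p) measure. -/
def pmeas (p : ℝ) {n : ℕ} (S : Set (Fin n → ZMod 2)) : ℝ :=
  ∑ x : Fin n → ZMod 2, if x ∈ S then pmass p x else 0

/-- A decoder is `t`-local if each output coordinate depends on at most `t`
input coordinates. -/
def IsLocal {k n : ℕ} (g : (Fin k → ZMod 2) → (Fin n → ZMod 2)) (t : ℕ) : Prop :=
  ∀ a : Fin n, ∃ N : Finset (Fin k), N.card ≤ t ∧
    ∀ y y' : Fin k → ZMod 2, (∀ j ∈ N, y j = y' j) → g y a = g y' a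

-- weight function
def wt (p : ℝ) (a : ZMod 2) : ℝ := if a = 0 then 1 - p else p

lemma pmass_eq_prod (p : ℝ) {n : ℕ} (x : Fin n → ZMod 2) :
    pmass p x = ∏ i, wt p (x i) := by
  unfold pmass wt hw
  rw [Finset.prod_ite]
  simp only [Finset.prod_const, ne_eq]
  have h1 : (Finset.univ.filter fun i => x i = 0).card
      + (Finset.univ.filter fun i => ¬ x i = 0).card = n := by
    rw [Finset.card_filter_add_card_filter_not]
    simp
  have h2 : (Finset.univ.filter fun i => x i = 0).card
      = n - (Finset.univ.filter fun i => ¬ x i = 0).card := by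
    omega
  rw [h2, mul_comm]

lemma sum_wt (p : ℝ) : ∑ a : ZMod 2, wt p a = 1 := by
  have : (Finset.univ : Finset (ZMod 2)) = {0, 1} := by decide
  rw [this, Finset.sum_insert (by decide), Finset.sum_singleton]
  simp [wt]

-- existence of an information set
lemma exists_info_set {n k : ℕ} (U : Submodule (ZMod 2) (Fin n → ZMod 2))
    (hU : Module.finrank (ZMod 2) U = k) :
    ∃ I : Finset (Fin n), I.card = k ∧
      ∀ u : U, (∀ i ∈ I, (u : Fin n → ZMod 2) i = 0) → u = 0 := by
  classical
  set F := ZMod 2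
  haveI : FiniteDimensional F U := by infer_instance
  set φ : Fin n → Module.Dual F U :=
    fun i => (LinearMap.proj i).comp U.subtype with hφ
  have hspan : Submodule.span F (Set.range φ) = ⊤ := by
    rw [eq_top_iff]
    rintro ψ -
    obtain ⟨Ψ, hΨ⟩ := LinearMap.exists_extend ψ
    have : ψ = ∑ i, Ψ (Pi.single i 1) • φ i := by
      ext u
      have := LinearMap.pi_apply_eq_sum_univ Ψ (u : Fin n → ZMod 2)
      rw [← hΨ]
      simp only [LinearMap.comp_apply, LinearMap.sum_apply, LinearMap.smul_apply, hφ,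
        LinearMap.proj_apply, Submodule.subtype_apply]
      rw [this]
      apply Finset.sum_congr rfl
      intro i _
      rw [smul_eq_mul, smul_eq_mul, mul_comm]
      congr 2
      ext j
      simp [Pi.single_apply, eq_comm]
    rw [this]
    exact Submodule.sum_mem _ fun i _ =>
      Submodule.smul_mem _ _ (Submodule.subset_span ⟨i, rfl⟩)
  obtain ⟨s, hsub, hs_span, hs_li⟩ := exists_linearIndependent F (Set.range φ)
  rw [hspan] at hs_span
  have hfin : s.Finite := hs_li.setFinite
  have hb : Module.Basis s F (Module.Dual F U) :=
    Module.Basis.mk hs_li (by rw [Subtype.range_coe, hs_span])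
  -- choose representatives
  choose c hc using fun ψ : s => (hsub ψ.2 : ∃ i, φ i = (ψ : Module.Dual F U))
  haveI : Fintype s := hfin.fintype
  have hcinj : Function.Injective c := by
    intro a b hab
    apply Subtype.ext
    rw [← hc a, ← hc b, hab]
  refine ⟨Finset.univ.image c, ?_, ?_⟩
  · rw [Finset.card_image_of_injective _ hcinj, Finset.card_univ,
      ← Module.finrank_eq_card_basis hb, Subspace.dual_finrank_eq, hU]
  · intro u hu
    have hz : ∀ ψ : Module.Dual F U, ψ u = 0 := by
      intro ψ
      have hmem : ψ ∈ Submodule.span F s := by rw [hs_span]; trivial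
      induction hmem using Submodule.span_induction with
      | mem ψ hψ =>
          have h0 := hu (c ⟨ψ, hψ⟩) (Finset.mem_image_of_mem _ (Finset.mem_univ _))
          have h2 : ψ = φ (c ⟨ψ, hψ⟩) := (hc ⟨ψ, hψ⟩).symm
          rw [h2]
          simpa [hφ] using h0
      | zero => simp
      | add _ _ _ _ h1 h2 => simp [h1, h2]
      | smul r _ _ h => simp [h]
    exact (Module.forall_dual_apply_eq_zero_iff F (u : U)).mp hz

theorem stmt0 {n k : ℕ} (p : ℝ) (hp0 : 0 < p) (hp1 : p < 1)
    (U : Submodule (ZMod 2) (Fin n → ZMod 2))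
    (hU : Module.finrank (ZMod 2) U = k) :
    (min p (1 - p)) ^ (n - k) ≤ pmeas p (U : Set (Fin n → ZMod 2)) := by
  classical
  set m := min p (1 - p) with hm
  have hm0 : 0 < m := lt_min hp0 (by linarith)
  obtain ⟨I, hIcard, hIinj⟩ := exists_info_set U hU
  have hwm : ∀ a : ZMod 2, m ≤ wt p a := by
    intro a
    unfold wt
    split
    · exact min_le_right _ _
    · exact min_le_left _ _
  -- the projection map is a linear equivalence
  haveI : FiniteDimensional (ZMod 2) U := by infer_instance
  set π : U →ₗ[ZMod 2] ({x // x ∈ I} → ZMod 2) :=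
    { toFun := fun u => fun i => (u : Fin n → ZMod 2) i
      map_add' := by intros; rfl
      map_smul' := by intros; rfl } with hπ
  have hπinj : Function.Injective π := by
    rw [← LinearMap.ker_eq_bot]
    rw [LinearMap.ker_eq_bot']
    intro u hu
    apply hIinj
    intro i hi
    have := congrFun hu ⟨i, hi⟩
    simpa [hπ] using this
  have hdim : Module.finrank (ZMod 2) U = Module.finrank (ZMod 2) ({x // x ∈ I} → ZMod 2) := by
    rw [hU, Module.finrank_pi, Fintype.card_coe, hIcard]
  let e : U ≃ₗ[ZMod 2] ({x // x ∈ I} → ZMod 2) := LinearMap.linearEquivOfInjective π hπinj hdim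
  -- rewrite pmeas as a sum over U
  have hsum : pmeas p (U : Set (Fin n → ZMod 2))
      = ∑ u : U, pmass p (u : Fin n → ZMod 2) := by
    unfold pmeas
    rw [← Finset.sum_filter]
    rw [← Finset.sum_subtype (Finset.univ.filter (· ∈ (U : Set (Fin n → ZMod 2))))
      (p := fun x => x ∈ U) (by intro x; simp) (fun x => pmass p x)]
  rw [hsum]
  -- lower bound each term
  have key : ∀ u : U, m ^ (n - k) * ∏ i : {x // x ∈ I}, wt p ((u : Fin n → ZMod 2) i)
      ≤ pmass p (u : Fin n → ZMod 2) := by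
    intro u
    rw [pmass_eq_prod]
    have hsplit : ∏ i, wt p ((u : Fin n → ZMod 2) i)
        = (∏ i ∈ Iᶜ, wt p ((u : Fin n → ZMod 2) i)) * ∏ i ∈ I, wt p ((u : Fin n → ZMod 2) i) := by
      rw [mul_comm, Finset.prod_mul_prod_compl]
    rw [hsplit]
    have h1 : ∏ i : {x // x ∈ I}, wt p ((u : Fin n → ZMod 2) i)
        = ∏ i ∈ I, wt p ((u : Fin n → ZMod 2) i) :=
      Finset.prod_coe_sort I fun i => wt p ((u : Fin n → ZMod 2) i)
    have h1' := h1
    rw [h1]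
    apply mul_le_mul_of_nonneg_right
    · calc m ^ (n - k) = ∏ _i ∈ Iᶜ, m := by
            rw [Finset.prod_const, Finset.card_compl, Fintype.card_fin, hIcard]
          _ ≤ _ := Finset.prod_le_prod (fun _ _ => le_of_lt hm0) (fun i _ => hwm _)
    · exact Finset.prod_nonneg fun i _ => le_trans (le_of_lt hm0) (hwm _)
  calc m ^ (n - k) = m ^ (n - k) * ∑ y : {x // x ∈ I} → ZMod 2, ∏ i, wt p (y i) := by
        rw [← Fintype.prod_sum fun (_ : {x // x ∈ I}) (a : ZMod 2) => wt p a]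
        rw [Finset.prod_const, sum_wt, one_pow, mul_one]
    _ = m ^ (n - k) * ∑ u : U, ∏ i : {x // x ∈ I}, wt p ((u : Fin n → ZMod 2) i) := by
        congr 1
        rw [← Equiv.sum_comp e.toEquiv (fun y => ∏ i, wt p (y i))]
        apply Finset.sum_congr rfl
        intro u _
        apply Finset.prod_congr rfl
        intro i _
        congr 1
    _ = ∑ u : U, m ^ (n - k) * ∏ i : {x // x ∈ I}, wt p ((u : Fin n → ZMod 2) i) := by
        rw [Finset.mul_sum]
    _ ≤ ∑ u : U, pmass p (u : Fin n → ZMod 2) := Finset.sum_le_sum fun u _ => key u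
end
end

section
/- Let U be a k-dimensional linear subspace of F_2^n, equipped with the product Bernoulli(p) measure for p in (0,1). Then the probability of U is at most (max{p,1-p})^{n-k}. -/
open scoped Classical BigOperators
open Filter

noncomputable section

lemma exists_spt {n : ℕ} (V : Submodule (ZMod 2) (Fin n → ZMod 2)) :
    ∃ S : Finset (Fin n), S.card ≤ Module.finrank (ZMod 2) V ∧
      ∀ v ∈ V, (∀ i ∈ S, v i = 0) → v = 0 := by
  generalize hd : Module.finrank (ZMod 2) V = d
  induction d using Nat.strong_induction_on generalizing V with
  | _ d ih =>
    by_cases hV : V = ⊥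
    · refine ⟨∅, by simp, fun v hv _ => ?_⟩
      simpa [hV] using hv
    · obtain ⟨v, hvV, hv0⟩ := Submodule.exists_mem_ne_zero_of_ne_bot hV
      obtain ⟨i, hi⟩ : ∃ i, v i ≠ 0 := by
        by_contra h; push_neg at h; exact hv0 (funext fun i => h i)
      set V' := V ⊓ LinearMap.ker (LinearMap.proj (R := ZMod 2) (φ := fun _ : Fin n => ZMod 2) i) with hV'
      have hlt : V' < V := by
        refine lt_of_le_of_ne inf_le_left ?_
        intro h
        have : v ∈ V' := h ▸ hvV
        exact hi (this.2)
      have hfr : Module.finrank (ZMod 2) V' < d := by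
        rw [← hd]; exact Submodule.finrank_lt_finrank_of_lt hlt
      obtain ⟨S', hcard, hS'⟩ := ih _ hfr V' rfl
      refine ⟨insert i S', ?_, ?_⟩
      · calc (insert i S').card ≤ S'.card + 1 := Finset.card_insert_le _ _
          _ ≤ d := by omega
      · intro w hw hz
        refine hS' w ⟨hw, ?_⟩ fun j hj => hz j (Finset.mem_insert_of_mem hj)
        simpa using hz i (Finset.mem_insert_self _ _)

theorem stmt1 {n k : ℕ} (p : ℝ) (hp0 : 0 < p) (hp1 : p < 1)
    (U : Submodule (ZMod 2) (Fin n → ZMod 2))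
    (hU : Module.finrank (ZMod 2) U = k) :
    pmeas p (U : Set (Fin n → ZMod 2)) ≤ (max p (1 - p)) ^ (n - k) := by
  simp only [pmeas, pmass, hw, Set.mem_setOf_eq]
  obtain ⟨S, hScard, hS⟩ := exists_spt U
  rw [hU] at hScard
  set M := max p (1 - p) with hM
  have h1p : 0 < 1 - p := by linarith
  have hM0 : (0:ℝ) ≤ M := le_max_of_le_left hp0.le
  have hM1 : M ≤ 1 := max_le hp1.le (by linarith)
  set f : ZMod 2 → ℝ := fun b => if b = 0 then 1 - p else p with hf
  have hfnn : ∀ b, 0 ≤ f b := fun b => by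
    by_cases h : b = 0 <;> simp [hf, h] <;> linarith
  have hfM : ∀ b, f b ≤ M := fun b => by
    by_cases h : b = 0 <;> simp [hf, h, hM]
  have hpm : ∀ x : Fin n → ZMod 2,
      p ^ ((Finset.univ.filter fun i => x i ≠ 0).card) *
        (1-p) ^ (n - (Finset.univ.filter fun i => x i ≠ 0).card) = ∏ i, f (x i) := by
    intro x
    rw [← Finset.prod_filter_mul_prod_filter_not Finset.univ (fun i => x i ≠ 0)
      (fun i => f (x i))]
    have hcard : (Finset.univ.filter fun i => ¬ x i ≠ 0).card
        = n - (Finset.univ.filter fun i => x i ≠ 0).card := by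
      have := Finset.card_filter_add_card_filter_not
        (s := (Finset.univ : Finset (Fin n))) (p := fun i => x i ≠ 0)
      simp only [Finset.card_univ, Fintype.card_fin] at this; omega
    congr 1
    · rw [Finset.prod_congr rfl (g := fun _ => p) (fun i hi => by
        simp only [Finset.mem_filter] at hi; simp [hf, hi.2]), Finset.prod_const]
    · rw [Finset.prod_congr rfl (g := fun _ => 1 - p) (fun i hi => by
        simp only [Finset.mem_filter, not_not] at hi; simp [hf, hi.2]),
        Finset.prod_const, hcard]
  set F := Finset.univ.filter (fun x : Fin n → ZMod 2 => x ∈ U) with hF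
  have step1 : (∑ x : Fin n → ZMod 2, if x ∈ (U : Set (Fin n → ZMod 2)) then
      p ^ ((Finset.univ.filter fun i => x i ≠ 0).card) *
        (1-p) ^ (n - (Finset.univ.filter fun i => x i ≠ 0).card) else 0)
      = ∑ x ∈ F, ∏ i, f (x i) := by
    rw [Finset.sum_filter]
    exact Finset.sum_congr rfl fun x _ => by
      by_cases h : x ∈ U <;> simp [h, hpm x]
  rw [step1]
  -- split the product
  have step2 : ∀ x : Fin n → ZMod 2, (∏ i, f (x i)) ≤
      (∏ i ∈ S, f (x i)) * M ^ (n - S.card) := by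
    intro x
    rw [← Finset.prod_filter_mul_prod_filter_not Finset.univ (fun i => i ∈ S)
      (fun i => f (x i)), Finset.filter_mem_eq_inter, Finset.univ_inter]
    refine mul_le_mul_of_nonneg_left ?_ (Finset.prod_nonneg fun i _ => hfnn _)
    calc (∏ i ∈ Finset.univ.filter (fun i => i ∉ S), f (x i))
        ≤ M ^ (Finset.univ.filter (fun i => i ∉ S)).card :=
          by
            rw [← Finset.prod_const]
            exact Finset.prod_le_prod (fun i _ => hfnn _) (fun i _ => hfM _)
      _ = M ^ (n - S.card) := by
          congr 1
          have := Finset.card_filter_add_card_filter_not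
            (s := (Finset.univ : Finset (Fin n))) (p := fun i => i ∈ S)
          simp [Finset.filter_mem_eq_inter] at this ⊢
          omega
  calc (∑ x ∈ F, ∏ i, f (x i))
      ≤ ∑ x ∈ F, (∏ i ∈ S, f (x i)) * M ^ (n - S.card) :=
        Finset.sum_le_sum fun x _ => step2 x
    _ = (∑ x ∈ F, ∏ i ∈ S, f (x i)) * M ^ (n - S.card) := by
        rw [Finset.sum_mul]
    _ ≤ 1 * M ^ (n - S.card) := by
        refine mul_le_mul_of_nonneg_right ?_ (pow_nonneg hM0 _)
        -- restriction map
        set r : (Fin n → ZMod 2) → ({i // i ∈ S} → ZMod 2) := fun x j => x j.1 with hr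
        have hinj : ∀ x ∈ F, ∀ y ∈ F, r x = r y → x = y := by
          intro x hx y hy hxy
          simp only [hF, Finset.mem_filter] at hx hy
          have hmem : x - y ∈ U := sub_mem hx.2 hy.2
          have hz : ∀ i ∈ S, (x - y) i = 0 := by
            intro i hi
            have := congrFun hxy ⟨i, hi⟩
            simp [hr] at this
            simp [this]
          have := hS _ hmem hz
          exact sub_eq_zero.mp this
        have e1 : (∑ x ∈ F, ∏ i ∈ S, f (x i))
            = ∑ y ∈ F.image r, ∏ j : {i // i ∈ S}, f (y j) := by
          rw [Finset.sum_image hinj]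
          exact Finset.sum_congr rfl fun x _ =>
            (Finset.prod_coe_sort S (fun i => f (x i))).symm
        rw [e1]
        have e2 : (∑ y ∈ F.image r, ∏ j : {i // i ∈ S}, f (y j))
            ≤ ∑ y : {i // i ∈ S} → ZMod 2, ∏ j : {i // i ∈ S}, f (y j) :=
          Finset.sum_le_sum_of_subset_of_nonneg (Finset.subset_univ _)
            (fun y _ _ => Finset.prod_nonneg fun j _ => hfnn _)
        refine e2.trans ?_
        rw [← Fintype.prod_sum (fun (_ : {i // i ∈ S}) (b : ZMod 2) => f b)]
        have hsum : (∑ b : ZMod 2, f b) = 1 := by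
          have : (Finset.univ : Finset (ZMod 2)) = {0, 1} := by decide
          rw [this]; simp [hf]
        rw [hsum]; simp
    _ ≤ M ^ (n - k) := by
        rw [one_mul]
        exact pow_le_pow_of_le_one hM0 hM1 (by omega)
end
end

section
/- Let X_1,...,X_{k+1} be i.i.d. Bernoulli(p) with 0 < p ≤ 1/2. For any encoder f: F_2^{k+1} → F_2^k and any 2-local decoder g: F_2^k → F_2^{k+1} (each output coordinate depends on at most 2 input coordinates), the probability that g(f(X^{k+1})) = X^{k+1} is at most 1 − p^2. -/
open scoped Classical BigOperators
open Filter

noncomputable section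

namespace S11

lemma zmod2_cases : ∀ v : ZMod 2, v = 0 ∨ v = 1 := by decide

lemma zmod2_ne_iff {v w : ZMod 2} : v ≠ w ↔ v = w + 1 := by revert v w; decide

/-- single-coordinate weight -/
def wgt (p : ℝ) (v : ZMod 2) : ℝ := if v = 1 then p else 1 - p

section Wgt

variable {p : ℝ} (hp0 : 0 < p) (hp : p ≤ 1 / 2)

include hp0 hp in
lemma wgt_pos (v : ZMod 2) : 0 < wgt p v := by
  unfold wgt; split <;> linarith

include hp0 hp in
lemma le_wgt (v : ZMod 2) : p ≤ wgt p v := by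
  unfold wgt; split <;> linarith

lemma wgt_zero : wgt p 0 = 1 - p := by unfold wgt; norm_num

lemma wgt_one : wgt p 1 = p := by unfold wgt; norm_num

lemma wgt_add : wgt p 0 + wgt p 1 = 1 := by rw [wgt_zero, wgt_one]; ring

end Wgt

variable {ι : Type*} [Fintype ι] [DecidableEq ι]

/-- measure of a set of output vectors -/
def nu (p : ℝ) (M : Set (ι → ZMod 2)) : ℝ :=
  ∑ x : ι → ZMod 2, if x ∈ M then ∏ a, wgt p (x a) else 0

/-- `M` only depends on coordinates in `O`. -/
def Det (M : Set (ι → ZMod 2)) (O : Finset ι) : Prop :=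
  ∀ x y : ι → ZMod 2, (∀ a ∈ O, x a = y a) → (x ∈ M ↔ y ∈ M)

lemma Det.mono {M : Set (ι → ZMod 2)} {O O' : Finset ι} (h : Det M O) (hsub : O ⊆ O') :
    Det M O' := fun x y hxy => h x y (fun a ha => hxy a (hsub ha))

section Nu

variable {p : ℝ} (hp0 : 0 < p) (hp : p ≤ 1 / 2)

include hp0 hp in
lemma mass_nonneg (x : ι → ZMod 2) : 0 ≤ ∏ a, wgt p (x a) :=
  Finset.prod_nonneg (fun a _ => le_of_lt (wgt_pos hp0 hp _))

include hp0 hp in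
lemma nu_nonneg (M : Set (ι → ZMod 2)) : 0 ≤ nu p M := by
  apply Finset.sum_nonneg
  intro x _
  split
  · exact mass_nonneg hp0 hp x
  · exact le_refl 0

include hp0 hp in
lemma nu_mono {M M' : Set (ι → ZMod 2)} (h : M ⊆ M') : nu p M ≤ nu p M' := by
  apply Finset.sum_le_sum
  intro x _
  by_cases hx : x ∈ M
  · rw [if_pos hx, if_pos (h hx)]
  · rw [if_neg hx]
    split
    · exact mass_nonneg hp0 hp x
    · exact le_refl 0

lemma nu_union_disjoint {M M' : Set (ι → ZMod 2)} (h : M ∩ M' = ∅) :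
    nu p (M ∪ M') = nu p M + nu p M' := by
  unfold nu
  rw [← Finset.sum_add_distrib]
  apply Finset.sum_congr rfl
  intro x _
  have hmem : x ∈ M ∪ M' ↔ x ∈ M ∨ x ∈ M' := Set.mem_union x M M'
  by_cases hx : x ∈ M
  · have hx' : x ∉ M' := by
      intro hx'
      exact absurd (Set.mem_inter hx hx') (by rw [h]; exact Set.notMem_empty x)
    rw [if_pos (hmem.mpr (Or.inl hx)), if_pos hx, if_neg hx', add_zero]
  · by_cases hx' : x ∈ M'
    · rw [if_pos (hmem.mpr (Or.inr hx')), if_neg hx, if_pos hx', zero_add]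
    · rw [if_neg (fun hmm => (hmem.mp hmm).elim hx hx'), if_neg hx, if_neg hx', add_zero]

lemma sum_wgt_univ : (∑ v : ZMod 2, wgt p v) = 1 := by
  rw [show (Finset.univ : Finset (ZMod 2)) = {0, 1} from by decide]
  rw [Finset.sum_insert (by decide), Finset.sum_singleton, wgt_add]

lemma nu_univ : nu p (Set.univ : Set (ι → ZMod 2)) = 1 := by
  have h := Fintype.prod_sum (fun (_ : ι) (v : ZMod 2) => wgt p v)
  unfold nu
  simp only [Set.mem_univ, if_true]
  rw [← h]
  rw [Finset.prod_congr rfl (fun a _ => sum_wgt_univ (p := p)), Finset.prod_const_one]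

/-- Conditional independence of one coordinate. -/
lemma nu_cond {M : Set (ι → ZMod 2)} {O : Finset ι} {a : ι} (hdet : Det M O) (ha : a ∉ O)
    (v : ZMod 2) : nu p ({x | x a = v} ∩ M) = wgt p v * nu p M := by
  classical
  have hupd : ∀ (x : ι → ZMod 2) (w : ZMod 2), x ∈ M ↔ Function.update x a w ∈ M := by
    intro x w
    exact hdet x (Function.update x a w) (fun b hb =>
      (Function.update_of_ne (ne_of_mem_of_not_mem hb ha) w x).symm)
  set F : (ι → ZMod 2) → ℝ :=
    fun x => if x ∈ M then ∏ b ∈ Finset.univ.erase a, wgt p (x b) else 0 with hF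
  have hFupd : ∀ (x : ι → ZMod 2) (w : ZMod 2), F (Function.update x a w) = F x := by
    intro x w
    rw [hF]
    simp only
    have hMeq : (Function.update x a w ∈ M) = (x ∈ M) := by
      rw [eq_iff_iff]; exact (hupd x w).symm
    rw [hMeq]
    by_cases hxM : x ∈ M
    · rw [if_pos hxM, if_pos hxM]
      apply Finset.prod_congr rfl
      intro b hb
      rw [Function.update_of_ne (Finset.ne_of_mem_erase hb) w x]
    · rw [if_neg hxM, if_neg hxM]
  have hT : ∀ w : ZMod 2, nu p ({x | x a = w} ∩ M)
      = wgt p w * ∑ x ∈ Finset.univ.filter (fun x : ι → ZMod 2 => x a = w), F x := by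
    intro w
    rw [Finset.sum_filter (fun x : ι → ZMod 2 => x a = w) F]
    unfold nu
    rw [Finset.mul_sum]
    apply Finset.sum_congr rfl
    intro x _
    by_cases hxa : x a = w
    · rw [if_pos hxa]
      by_cases hxM : x ∈ M
      · rw [if_pos (show x ∈ {x | x a = w} ∩ M from ⟨hxa, hxM⟩)]
        have hFx : F x = ∏ b ∈ Finset.univ.erase a, wgt p (x b) := if_pos hxM
        rw [hFx, ← Finset.mul_prod_erase Finset.univ _ (Finset.mem_univ a), hxa]
      · rw [if_neg (show x ∉ {x | x a = w} ∩ M from fun hmm => hxM hmm.2)]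
        have hFx : F x = 0 := if_neg hxM
        rw [hFx, mul_zero]
    · rw [if_neg hxa, if_neg (show x ∉ {x | x a = w} ∩ M from fun hmm => hxa hmm.1), mul_zero]
  have hTind : ∀ w w' : ZMod 2,
      (∑ x ∈ Finset.univ.filter (fun x : ι → ZMod 2 => x a = w), F x)
        = ∑ x ∈ Finset.univ.filter (fun x : ι → ZMod 2 => x a = w'), F x := by
    intro w w'
    apply Finset.sum_nbij' (fun x => Function.update x a w') (fun x => Function.update x a w)
    · intro x _
      simp only [Finset.mem_filter, Finset.mem_univ, true_and]
      exact Function.update_self a w' x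
    · intro x _
      simp only [Finset.mem_filter, Finset.mem_univ, true_and]
      exact Function.update_self a w x
    · intro x hx
      simp only [Finset.mem_filter, Finset.mem_univ, true_and] at hx
      rw [Function.update_idem, ← hx, Function.update_eq_self]
    · intro x hx
      simp only [Finset.mem_filter, Finset.mem_univ, true_and] at hx
      rw [Function.update_idem, ← hx, Function.update_eq_self]
    · intro x _
      rw [hFupd]
  have hsplitM : nu p M = nu p ({x | x a = 0} ∩ M) + nu p ({x | x a = 1} ∩ M) := by
    rw [← nu_union_disjoint]
    · congr 1
      ext x
      simp only [Set.mem_union, Set.mem_inter_iff, Set.mem_setOf_eq]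
      constructor
      · intro hx
        rcases zmod2_cases (x a) with h | h
        · exact Or.inl ⟨h, hx⟩
        · exact Or.inr ⟨h, hx⟩
      · rintro (⟨_, hx⟩ | ⟨_, hx⟩) <;> exact hx
    · apply Set.eq_empty_iff_forall_notMem.mpr
      rintro x ⟨⟨h0, _⟩, ⟨h1, _⟩⟩
      have h0' : x a = 0 := h0
      have h1' : x a = 1 := h1
      rw [h0'] at h1'
      exact absurd h1' (by decide)
  have hnuM : nu p M = ∑ x ∈ Finset.univ.filter (fun x : ι → ZMod 2 => x a = v), F x := by
    rw [hsplitM, hT 0, hT 1, hTind 0 v, hTind 1 v, ← add_mul, wgt_add, one_mul]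
  rw [hT v, hnuM]

include hp0 hp in
lemma nu_coord (a : ι) (v : ZMod 2) : nu p {x : ι → ZMod 2 | x a = v} = wgt p v := by
  have h := nu_cond (p := p) (M := Set.univ) (O := (∅ : Finset ι)) (a := a)
    (fun x y _ => Iff.rfl) (Finset.notMem_empty a) v
  rw [Set.inter_univ] at h
  rw [h, nu_univ, mul_one]

include hp0 hp in
lemma nu_parity (A : Finset ι) (hA : A.Nonempty) (c : ZMod 2) :
    p ≤ nu p {x : ι → ZMod 2 | (∑ a ∈ A, x a) = c} := by
  classical
  induction A using Finset.strongInduction generalizing c with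
  | _ A ih =>
    obtain ⟨a, haA⟩ := hA
    by_cases hsing : A.erase a = ∅
    · have hAa : A = {a} := by
        apply Finset.eq_singleton_iff_unique_mem.mpr
        refine ⟨haA, fun b hb => ?_⟩
        by_contra hne
        exact (Finset.notMem_empty b) (hsing ▸ Finset.mem_erase.mpr ⟨hne, hb⟩)
      have hset : {x : ι → ZMod 2 | (∑ b ∈ A, x b) = c} = {x | x a = c} := by
        ext x
        rw [hAa]
        simp [Finset.sum_singleton]
      rw [hset, nu_coord hp0 hp]
      exact le_wgt hp0 hp c
    · have hss : A.erase a ⊂ A := Finset.erase_ssubset haA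
      have hA'ne : (A.erase a).Nonempty := Finset.nonempty_iff_ne_empty.mpr hsing
      have key : ∀ u : ZMod 2,
          {x : ι → ZMod 2 | x a = u} ∩ {x | (∑ b ∈ A.erase a, x b) = c - u}
            = {x : ι → ZMod 2 | (∑ b ∈ A, x b) = c} ∩ {x | x a = u} := by
        intro u
        ext x
        simp only [Set.mem_inter_iff, Set.mem_setOf_eq]
        constructor
        · rintro ⟨h1, h2⟩
          refine ⟨?_, h1⟩
          rw [← Finset.add_sum_erase A _ haA, h1, h2]
          ring
        · rintro ⟨h1, h2⟩
          refine ⟨h2, ?_⟩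
          have h3 := Finset.add_sum_erase A x haA
          linear_combination h1 + h3 - h2
      have hdet : ∀ u : ZMod 2, Det {x : ι → ZMod 2 | (∑ b ∈ A.erase a, x b) = c - u} (A.erase a) := by
        intro u x y hxy
        simp only [Set.mem_setOf_eq]
        rw [Finset.sum_congr rfl (fun b hb => hxy b hb)]
      have hana : a ∉ A.erase a := Finset.notMem_erase a A
      have hunion : {x : ι → ZMod 2 | (∑ b ∈ A, x b) = c}
          = ({x : ι → ZMod 2 | (∑ b ∈ A, x b) = c} ∩ {x | x a = 0})
            ∪ ({x : ι → ZMod 2 | (∑ b ∈ A, x b) = c} ∩ {x | x a = 1}) := by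
        ext x
        simp only [Set.mem_union, Set.mem_inter_iff, Set.mem_setOf_eq]
        constructor
        · intro hx
          rcases zmod2_cases (x a) with h | h
          · exact Or.inl ⟨hx, h⟩
          · exact Or.inr ⟨hx, h⟩
        · rintro (⟨hx, _⟩ | ⟨hx, _⟩) <;> exact hx
      rw [hunion, nu_union_disjoint]
      · rw [← key 0, ← key 1, nu_cond (hdet 0) hana 0, nu_cond (hdet 1) hana 1]
        have i0 := ih (A.erase a) hss hA'ne (c - 0)
        have i1 := ih (A.erase a) hss hA'ne (c - 1)
        have w0 : 0 < wgt p 0 := wgt_pos hp0 hp 0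
        have w1 : 0 < wgt p 1 := wgt_pos hp0 hp 1
        calc p = (wgt p 0 + wgt p 1) * p := by rw [wgt_add, one_mul]
        _ = wgt p 0 * p + wgt p 1 * p := by ring
        _ ≤ _ := add_le_add (mul_le_mul_of_nonneg_left i0 (le_of_lt w0))
            (mul_le_mul_of_nonneg_left i1 (le_of_lt w1))
      · apply Set.eq_empty_iff_forall_notMem.mpr
        rintro x ⟨⟨_, h0⟩, ⟨_, h1⟩⟩
        have h0' : x a = 0 := h0
        have h1' : x a = 1 := h1
        rw [h0'] at h1'
        exact absurd h1' (by decide)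

end Nu

section Comb

variable {κ : Type*} [Fintype κ] [DecidableEq κ]

/-- `g` depends only on coordinates in `S`. -/
def DefOn (g : (κ → ZMod 2) → ZMod 2) (S : Finset κ) : Prop :=
  ∀ y y' : κ → ZMod 2, (∀ i ∈ S, y i = y' i) → g y = g y'

/-- `g` depends essentially on coordinate `i`. -/
def Ess (g : (κ → ZMod 2) → ZMod 2) (i : κ) : Prop :=
  ∃ (y : κ → ZMod 2) (v w : ZMod 2), g (Function.update y i v) ≠ g (Function.update y i w)

lemma not_ess_update {g : (κ → ZMod 2) → ZMod 2} {i : κ} (h : ¬ Ess g i) (y : κ → ZMod 2)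
    (v : ZMod 2) : g (Function.update y i v) = g y := by
  by_contra hne
  exact h ⟨y, v, y i, by rwa [Function.update_eq_self]⟩

lemma ess_mem_defOn {g : (κ → ZMod 2) → ZMod 2} {S : Finset κ} {i : κ}
    (hdef : DefOn g S) (hess : Ess g i) : i ∈ S := by
  by_contra hni
  obtain ⟨y, v, w, hne⟩ := hess
  apply hne
  apply hdef
  intro j hj
  have hji : j ≠ i := fun hj' => hni (hj' ▸ hj)
  rw [Function.update_of_ne hji, Function.update_of_ne hji]

lemma defOn_erase {g : (κ → ZMod 2) → ZMod 2} {S : Finset κ} {i : κ}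
    (hdef : DefOn g S) (h : ¬ Ess g i) : DefOn g (S.erase i) := by
  intro y y' hagree
  have h1 : g y = g (Function.update y' i (y i)) := by
    apply hdef
    intro j hj
    by_cases hji : j = i
    · subst hji; rw [Function.update_self]
    · rw [Function.update_of_ne hji]
      exact hagree j (Finset.mem_erase.mpr ⟨hji, hj⟩)
  rw [h1, not_ess_update h]

lemma defOn_essSet {g : (κ → ZMod 2) → ZMod 2} :
    ∀ (S : Finset κ), DefOn g S → DefOn g (S.filter fun i => Ess g i) := by
  intro S
  induction S using Finset.strongInduction with
  | _ S ih =>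
    intro hdef
    by_cases hall : ∀ i ∈ S, Ess g i
    · rw [Finset.filter_true_of_mem hall]; exact hdef
    · push_neg at hall
      obtain ⟨i, hiS, hni⟩ := hall
      have h2 := ih (S.erase i) (Finset.erase_ssubset hiS) (defOn_erase hdef hni)
      have h3 : (S.erase i).filter (fun j => Ess g j) = S.filter (fun j => Ess g j) := by
        ext j
        simp only [Finset.mem_filter, Finset.mem_erase]
        constructor
        · rintro ⟨⟨_, hj⟩, hej⟩; exact ⟨hj, hej⟩
        · rintro ⟨hj, hej⟩
          exact ⟨⟨fun hji => hni (hji ▸ hej), hj⟩, hej⟩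
      rw [← h3]; exact h2

/-- the essential support -/
def ES (g : (κ → ZMod 2) → ZMod 2) : Finset κ := Finset.univ.filter fun i => Ess g i

lemma mem_ES {g : (κ → ZMod 2) → ZMod 2} {i : κ} : i ∈ ES g ↔ Ess g i := by
  unfold ES
  simp [Finset.mem_filter]

lemma const_of_defOn_empty {g : (κ → ZMod 2) → ZMod 2} (h : DefOn g ∅) (y y' : κ → ZMod 2) :
    g y = g y' := h y y' (fun i hi => absurd hi (Finset.notMem_empty i))

lemma one_var_form {g : (κ → ZMod 2) → ZMod 2} {i : κ} (hdef : DefOn g {i}) (hess : Ess g i) :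
    ∃ c, ∀ y, g y = y i + c := by
  set φ : ZMod 2 → ZMod 2 := fun v => g (Function.update (fun _ => 0) i v) with hφ
  have hrep : ∀ y, g y = φ (y i) := by
    intro y
    apply hdef
    intro j hj
    rw [Finset.mem_singleton] at hj; subst hj
    rw [Function.update_self]
  have hne : φ 0 ≠ φ 1 := by
    obtain ⟨y, v, w, hvw⟩ := hess
    have e1 : g (Function.update y i v) = φ v := by
      rw [hrep]; rw [Function.update_self]
    have e2 : g (Function.update y i w) = φ w := by
      rw [hrep]; rw [Function.update_self]
    rw [e1, e2] at hvw
    have hvwne : v ≠ w := fun h => hvw (h ▸ rfl)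
    rcases zmod2_cases v with hv | hv <;> rcases zmod2_cases w with hw | hw
    · exact absurd (hv.trans hw.symm) hvwne
    · rw [hv, hw] at hvw; exact hvw
    · rw [hv, hw] at hvw; exact fun h => hvw h.symm
    · exact absurd (hv.trans hw.symm) hvwne
  refine ⟨φ 0, fun y => ?_⟩
  rw [hrep y]
  rcases zmod2_cases (y i) with h | h
  · rw [h, zero_add]
  · rw [h]
    have : ∀ b0 b1 : ZMod 2, b0 ≠ b1 → b1 = 1 + b0 := by decide
    exact this (φ 0) (φ 1) hne

/-- the canonical 2-variable representative -/
def h2 (g : (κ → ZMod 2) → ZMod 2) (i j : κ) : ZMod 2 → ZMod 2 → ZMod 2 :=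
  fun u v => g (Function.update (Function.update (fun _ => 0) i u) j v)

lemma h2_rep {g : (κ → ZMod 2) → ZMod 2} {i j : κ} (hij : i ≠ j) (hdef : DefOn g {i, j})
    (y : κ → ZMod 2) : g y = h2 g i j (y i) (y j) := by
  apply hdef
  intro l hl
  rw [Finset.mem_insert, Finset.mem_singleton] at hl
  rcases hl with h | h
  · subst h; rw [Function.update_of_ne hij, Function.update_self]
  · subst h; rw [Function.update_self]

lemma h2_essFst {g : (κ → ZMod 2) → ZMod 2} {i j : κ} (hij : i ≠ j) (hdef : DefOn g {i, j})
    (hess : Ess g i) : ∃ w, h2 g i j 0 w ≠ h2 g i j 1 w := by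
  obtain ⟨y, v, v', hne⟩ := hess
  have e : ∀ u, g (Function.update y i u) = h2 g i j u (y j) := by
    intro u
    rw [h2_rep hij hdef]
    rw [Function.update_self, Function.update_of_ne (Ne.symm hij)]
  rw [e v, e v'] at hne
  have hvv : v ≠ v' := fun h => hne (h ▸ rfl)
  refine ⟨y j, ?_⟩
  rcases zmod2_cases v with h | h <;> rcases zmod2_cases v' with h' | h'
  · exact absurd (h.trans h'.symm) hvv
  · rw [h, h'] at hne; exact hne
  · rw [h, h'] at hne; exact fun hmm => hne hmm.symm
  · exact absurd (h.trans h'.symm) hvv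

lemma h2_essSnd {g : (κ → ZMod 2) → ZMod 2} {i j : κ} (hij : i ≠ j) (hdef : DefOn g {i, j})
    (hess : Ess g j) : ∃ w, h2 g i j w 0 ≠ h2 g i j w 1 := by
  obtain ⟨y, v, v', hne⟩ := hess
  have e : ∀ u, g (Function.update y j u) = h2 g i j (y i) u := by
    intro u
    rw [h2_rep hij hdef]
    rw [Function.update_self, Function.update_of_ne hij]
  rw [e v, e v'] at hne
  have hvv : v ≠ v' := fun h => hne (h ▸ rfl)
  refine ⟨y i, ?_⟩
  rcases zmod2_cases v with h | h <;> rcases zmod2_cases v' with h' | h'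
  · exact absurd (h.trans h'.symm) hvv
  · rw [h, h'] at hne; exact hne
  · rw [h, h'] at hne; exact fun hmm => hne hmm.symm
  · exact absurd (h.trans h'.symm) hvv

lemma classify2 : ∀ h : ZMod 2 → ZMod 2 → ZMod 2,
    (∃ w, h 0 w ≠ h 1 w) → (∃ w, h w 0 ≠ h w 1) →
    ((∀ u v, h u v = u + v + h 0 0) ∨
     (∃ w₁ w₂ vs, ∀ u v, (h u v = vs ↔ (u = w₁ ∧ v = w₂)))) := by
  decide

/-- substitute coordinate `i` by the constant `w`. -/
def sub1 (g : (κ → ZMod 2) → ZMod 2) (i : κ) (w : ZMod 2) : (κ → ZMod 2) → ZMod 2 :=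
  fun y => g (Function.update y i w)

lemma defOn_sub1 {g : (κ → ZMod 2) → ZMod 2} {S : Finset κ} (hdef : DefOn g S) (i : κ)
    (w : ZMod 2) : DefOn (sub1 g i w) (S.erase i) := by
  intro y y' hagree
  apply hdef
  intro j hj
  by_cases hji : j = i
  · subst hji; rw [Function.update_self, Function.update_self]
  · rw [Function.update_of_ne hji, Function.update_of_ne hji]
    exact hagree j (Finset.mem_erase.mpr ⟨hji, hj⟩)

lemma defOn_congr {g g' : (κ → ZMod 2) → ZMod 2} (h : ∀ y, g y = g' y) {S : Finset κ}
    (hdef : DefOn g S) : DefOn g' S :=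
  fun y y' ha => by rw [← h y, ← h y']; exact hdef y y' ha

lemma ess_congr {g g' : (κ → ZMod 2) → ZMod 2} (h : ∀ y, g y = g' y) {i : κ}
    (he : Ess g i) : Ess g' i := by
  obtain ⟨y, v, w, hne⟩ := he
  exact ⟨y, v, w, by rw [← h, ← h]; exact hne⟩

lemma sub1_of_not_mem {g : (κ → ZMod 2) → ZMod 2} {S : Finset κ} {i : κ} {w : ZMod 2}
    (hdef : DefOn g S) (hi : i ∉ S) (y : κ → ZMod 2) : sub1 g i w y = g y := by
  apply hdef
  intro j hj
  have hji : j ≠ i := fun hji => hi (by rw [← hji]; exact hj)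
  exact Function.update_of_ne hji w y

lemma sub1_const {g : (κ → ZMod 2) → ZMod 2} {i : κ} {w : ZMod 2}
    (h : ∀ y y', g y = g y') (y y' : κ → ZMod 2) : sub1 g i w y = sub1 g i w y' := h _ _

lemma sub1_ess_or_const {g : (κ → ZMod 2) → ZMod 2} {E : Finset κ} {i i' : κ} {w : ZMod 2}
    (hdef : DefOn g E) (hcard : E.card ≤ 2) (hess : Ess g i') (hne : i' ≠ i) :
    Ess (sub1 g i w) i' ∨ (∀ y y', sub1 g i w y = sub1 g i w y') := by
  by_cases hiE : i ∈ E
  · have hi'E : i' ∈ E := ess_mem_defOn hdef hess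
    have hsub : E.erase i ⊆ {i'} := by
      intro j hj
      rw [Finset.mem_erase] at hj
      rw [Finset.mem_singleton]
      by_contra hji'
      have hsubE : ({i, i', j} : Finset κ) ⊆ E := by
        intro l hl
        simp only [Finset.mem_insert, Finset.mem_singleton] at hl
        rcases hl with h|h|h
        · exact h ▸ hiE
        · exact h ▸ hi'E
        · exact h ▸ hj.2
      have hc : ({i, i', j} : Finset κ).card = 3 := by
        rw [Finset.card_insert_of_notMem, Finset.card_insert_of_notMem,
          Finset.card_singleton]
        · simp only [Finset.mem_singleton]
          exact fun h => hji' h.symm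
        · simp only [Finset.mem_insert, Finset.mem_singleton]
          push_neg
          exact ⟨Ne.symm hne, fun h => hj.1 h.symm⟩
      have := Finset.card_le_card hsubE
      omega
    have hd2 : DefOn (sub1 g i w) {i'} := by
      intro y y' ha
      apply defOn_sub1 hdef i w y y'
      intro j hj
      exact ha j (hsub hj)
    by_cases he : Ess (sub1 g i w) i'
    · exact Or.inl he
    · right
      intro y y'
      apply defOn_erase hd2 he y y'
      intro j hj
      rw [Finset.erase_singleton] at hj
      exact absurd hj (Finset.notMem_empty j)
  · left
    exact ess_congr (fun y => (sub1_of_not_mem hdef hiE y).symm) hess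

end Comb

section Main

variable {κ : Type*} [Fintype κ] [DecidableEq κ]
variable {ι : Type*} [Fintype ι] [DecidableEq ι]
variable {p : ℝ}

/-- locality of an instance -/
def Loc (G : ι → (κ → ZMod 2) → ZMod 2) (O : Finset ι) (I : Finset κ) : Prop :=
  ∀ a ∈ O, ∃ S : Finset κ, S ⊆ I ∧ S.card ≤ 2 ∧ DefOn (G a) S

/-- there is a missed set of measure ≥ r determined by `O` coordinates. -/
def Wit (p : ℝ) (G : ι → (κ → ZMod 2) → ZMod 2) (O : Finset ι) (r : ℝ) : Prop :=
  ∃ M : Set (ι → ZMod 2), (∀ y : κ → ZMod 2, (fun a => G a y) ∉ M) ∧ Det M O ∧ r ≤ nu p M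

lemma loc_can {G : ι → (κ → ZMod 2) → ZMod 2} {O : Finset ι} {I : Finset κ}
    (hloc : Loc G O I) {a : ι} (ha : a ∈ O) :
    ES (G a) ⊆ I ∧ (ES (G a)).card ≤ 2 ∧ DefOn (G a) (ES (G a)) := by
  obtain ⟨S, hSI, hc, hdef⟩ := hloc a ha
  have hsub : ES (G a) ⊆ S := fun i hi => ess_mem_defOn hdef (mem_ES.mp hi)
  have heq : S.filter (fun i => Ess (G a) i) = ES (G a) := by
    ext i
    simp only [Finset.mem_filter, mem_ES]
    constructor
    · rintro ⟨_, h⟩; exact h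
    · intro h; exact ⟨ess_mem_defOn hdef h, h⟩
  refine ⟨hsub.trans hSI, le_trans (Finset.card_le_card hsub) hc, ?_⟩
  rw [← heq]
  exact defOn_essSet S hdef

lemma det_coord (a : ι) (v : ZMod 2) : Det {x : ι → ZMod 2 | x a = v} {a} := by
  intro x y h
  simp only [Set.mem_setOf_eq]
  rw [h a (Finset.mem_singleton_self a)]

lemma Det.inter {M M' : Set (ι → ZMod 2)} {O : Finset ι} (h : Det M O) (h' : Det M' O) :
    Det (M ∩ M') O := by
  intro x y hxy
  simp only [Set.mem_inter_iff]
  rw [h x y hxy, h' x y hxy]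

lemma Det.union {M M' : Set (ι → ZMod 2)} {O : Finset ι} (h : Det M O) (h' : Det M' O) :
    Det (M ∪ M') O := by
  intro x y hxy
  simp only [Set.mem_union]
  rw [h x y hxy, h' x y hxy]

lemma wit_weaken {G : ι → (κ → ZMod 2) → ZMod 2} {O : Finset ι} {r r' : ℝ}
    (h : Wit p G O r) (hr : r' ≤ r) : Wit p G O r' := by
  obtain ⟨M, h1, h2, h3⟩ := h
  exact ⟨M, h1, h2, le_trans hr h3⟩

lemma wit_mono_O {G : ι → (κ → ZMod 2) → ZMod 2} {O O' : Finset ι} {r : ℝ}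
    (h : Wit p G O r) (hsub : O ⊆ O') : Wit p G O' r := by
  obtain ⟨M, h1, h2, h3⟩ := h
  exact ⟨M, h1, h2.mono hsub, h3⟩

lemma wit_const (hp0 : 0 < p) (hp : p ≤ 1 / 2) {G : ι → (κ → ZMod 2) → ZMod 2} {O : Finset ι}
    {a : ι} (haO : a ∈ O) (hconst : ∀ y y' : κ → ZMod 2, G a y = G a y') :
    Wit p G O p := by
  set c := G a (fun _ => 0) with hc
  refine ⟨{x | x a = c + 1}, ?_, ?_, ?_⟩
  · intro y hy
    have h1 : G a y = c + 1 := hy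
    have h2 : G a y = c := hconst y (fun _ => 0)
    rw [h2] at h1
    have hcc : ∀ d : ZMod 2, ¬(d = d + 1) := by decide
    exact absurd h1 (hcc c)
  · exact (det_coord a (c + 1)).mono (Finset.singleton_subset_iff.mpr haO)
  · rw [nu_coord hp0 hp]
    exact le_wgt hp0 hp _

/-- two-branch assembly by conditioning on the value of output `a` -/
lemma assemble2 (hp0 : 0 < p) (hp : p ≤ 1 / 2) {G : ι → (κ → ZMod 2) → ZMod 2} {O : Finset ι}
    {a : ι} (haO : a ∈ O) {r : ℝ} {M0 M1 : Set (ι → ZMod 2)}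
    (hdet0 : Det M0 (O.erase a)) (hdet1 : Det M1 (O.erase a))
    (hnu0 : r ≤ nu p M0) (hnu1 : r ≤ nu p M1)
    (hav0 : ∀ y, G a y = 0 → (fun e => G e y) ∉ M0)
    (hav1 : ∀ y, G a y = 1 → (fun e => G e y) ∉ M1) :
    Wit p G O r := by
  have hana : a ∉ O.erase a := Finset.notMem_erase a O
  refine ⟨({x | x a = 0} ∩ M0) ∪ ({x | x a = 1} ∩ M1), ?_, ?_, ?_⟩
  · rintro y (⟨h0, hm⟩ | ⟨h1, hm⟩)
    · exact hav0 y h0 hm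
    · exact hav1 y h1 hm
  · apply Det.union
    · exact ((det_coord a 0).mono (Finset.singleton_subset_iff.mpr haO)).inter
        (hdet0.mono (Finset.erase_subset a O))
    · exact ((det_coord a 1).mono (Finset.singleton_subset_iff.mpr haO)).inter
        (hdet1.mono (Finset.erase_subset a O))
  · rw [nu_union_disjoint, nu_cond hdet0 hana 0, nu_cond hdet1 hana 1]
    · have w0 : 0 < wgt p 0 := wgt_pos hp0 hp 0
      have w1 : 0 < wgt p 1 := wgt_pos hp0 hp 1
      calc r = (wgt p 0 + wgt p 1) * r := by rw [wgt_add, one_mul]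
      _ = wgt p 0 * r + wgt p 1 * r := by ring
      _ ≤ _ := add_le_add (mul_le_mul_of_nonneg_left hnu0 (le_of_lt w0))
          (mul_le_mul_of_nonneg_left hnu1 (le_of_lt w1))
    · apply Set.eq_empty_iff_forall_notMem.mpr
      rintro x ⟨⟨h0, _⟩, ⟨h1, _⟩⟩
      have h0' : x a = 0 := h0
      have h1' : x a = 1 := h1
      rw [h0'] at h1'
      exact absurd h1' (by decide)

/-- one-branch assembly by conditioning output `a` to the value `v` -/
lemma assemble1 (hp0 : 0 < p) (hp : p ≤ 1 / 2) {G : ι → (κ → ZMod 2) → ZMod 2} {O : Finset ι}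
    {a : ι} (haO : a ∈ O) {r : ℝ} (hr : 0 ≤ r) {v : ZMod 2} {MJ : Set (ι → ZMod 2)}
    (hdet : Det MJ (O.erase a)) (hnuJ : r ≤ nu p MJ)
    (hav : ∀ y, G a y = v → (fun e => G e y) ∉ MJ) :
    Wit p G O (p * r) := by
  have hana : a ∉ O.erase a := Finset.notMem_erase a O
  refine ⟨{x | x a = v} ∩ MJ, ?_, ?_, ?_⟩
  · rintro y ⟨h0, hm⟩
    exact hav y h0 hm
  · exact ((det_coord a v).mono (Finset.singleton_subset_iff.mpr haO)).inter
      (hdet.mono (Finset.erase_subset a O))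
  · rw [nu_cond hdet hana v]
    exact mul_le_mul (le_wgt hp0 hp v) hnuJ hr (le_of_lt (wgt_pos hp0 hp v))

/-- The chase lemma: an instance with an output depending on at most one variable, where
every input has at least two essential users, has a missed set of measure at least `p`. -/
lemma claimH (hp0 : 0 < p) (hp : p ≤ 1 / 2) :
    ∀ (n : ℕ) (G : ι → (κ → ZMod 2) → ZMod 2) (O : Finset ι) (I : Finset κ),
      I.card = n → Loc G O I →
      ((∃ a ∈ O, ∀ y y' : κ → ZMod 2, G a y = G a y') ∨
       ((∀ i ∈ I, 2 ≤ (O.filter fun e => Ess (G e) i).card) ∧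
        (∃ a ∈ O, (ES (G a)).card = 1))) →
      Wit p G O p := by
  intro n
  induction n using Nat.strong_induction_on with
  | _ n ih =>
  intro G O I hIcard hloc hyp
  rcases hyp with ⟨a, haO, hconst⟩ | ⟨hdeg, a, haO, hES1⟩
  · exact wit_const hp0 hp haO hconst
  · obtain ⟨i, hESi⟩ := Finset.card_eq_one.mp hES1
    obtain ⟨hESsub, hEScard, hESdef⟩ := loc_can hloc haO
    have hiI : i ∈ I := hESsub (hESi ▸ Finset.mem_singleton_self i)
    have hessai : Ess (G a) i := mem_ES.mp (hESi ▸ Finset.mem_singleton_self i)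
    have hdefa : DefOn (G a) {i} := hESi ▸ hESdef
    obtain ⟨c₁, hrep⟩ := one_var_form hdefa hessai
    have hi2 := hdeg i hiI
    have hgt : 1 < (O.filter fun e => Ess (G e) i).card := by omega
    obtain ⟨b, hbf, hba⟩ := Finset.exists_mem_ne hgt a
    rw [Finset.mem_filter] at hbf
    obtain ⟨hbO, hessbi⟩ := hbf
    obtain ⟨hEbsub, hEbcard, hEbdef⟩ := loc_can hloc hbO
    have hiEb : i ∈ ES (G b) := mem_ES.mpr hessbi
    by_cases hEb1 : (ES (G b)).card ≤ 1
    · -- b is also a half-edge on i: parity certificate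
      have hEbi : ES (G b) = {i} := by
        apply Finset.eq_singleton_iff_unique_mem.mpr
        refine ⟨hiEb, fun j hj => ?_⟩
        by_contra hji
        have hsubji : ({j, i} : Finset κ) ⊆ ES (G b) := by
          intro l hl
          simp only [Finset.mem_insert, Finset.mem_singleton] at hl
          rcases hl with h | h
          · exact h ▸ hj
          · exact h ▸ hiEb
        have hc2 : ({j, i} : Finset κ).card = 2 := by
          rw [Finset.card_insert_of_notMem (fun hmm => hji (Finset.mem_singleton.mp hmm)),
            Finset.card_singleton]
        have := Finset.card_le_card hsubji
        omega
      obtain ⟨c₂, hrepb⟩ := one_var_form (hEbi ▸ hEbdef) hessbi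
      refine ⟨{x | (∑ e ∈ ({a, b} : Finset ι), x e) = c₁ + c₂ + 1}, ?_, ?_, ?_⟩
      · intro y hy
        have hmem : (∑ e ∈ ({a, b} : Finset ι), G e y) = c₁ + c₂ + 1 := hy
        rw [Finset.sum_pair (Ne.symm hba)] at hmem
        rw [hrep y, hrepb y] at hmem
        have hdec : ∀ v d₁ d₂ : ZMod 2, ¬((v + d₁) + (v + d₂) = d₁ + d₂ + 1) := by decide
        exact hdec (y i) c₁ c₂ hmem
      · have hsub : ({a, b} : Finset ι) ⊆ O := by
          intro l hl
          simp only [Finset.mem_insert, Finset.mem_singleton] at hl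
          rcases hl with h | h
          · exact h ▸ haO
          · exact h ▸ hbO
        refine Det.mono ?_ hsub
        intro x y hxy
        simp only [Set.mem_setOf_eq]
        rw [Finset.sum_congr rfl (fun e he => hxy e he)]
      · exact nu_parity hp0 hp _ ⟨a, Finset.mem_insert_self a _⟩ _
    · -- b has a second essential variable l : recurse along the chain
      push_neg at hEb1
      have hEb2 : (ES (G b)).card = 2 := le_antisymm hEbcard hEb1
      obtain ⟨u1, u2, hu12, hEbpair⟩ := Finset.card_eq_two.mp hEb2
      have hil : ∃ l, l ≠ i ∧ ES (G b) = {i, l} := by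
        rw [hEbpair] at hiEb
        simp only [Finset.mem_insert, Finset.mem_singleton] at hiEb
        rcases hiEb with h | h
        · exact ⟨u2, fun hmm => hu12 (h ▸ hmm.symm), by rw [hEbpair, h]⟩
        · exact ⟨u1, fun hmm => hu12 (hmm.trans h), by rw [hEbpair, h, Finset.pair_comm]⟩
      obtain ⟨l, hli, hEbil⟩ := hil
      set Gu : ZMod 2 → ι → (κ → ZMod 2) → ZMod 2 := fun u e => sub1 (G e) i (u + c₁) with hGu
      have hlt : (I.erase i).card < n := by
        rw [Finset.card_erase_of_mem hiI]
        have hn1 : 0 < I.card := Finset.card_pos.mpr ⟨i, hiI⟩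
        omega
      have hrecurse : ∀ u : ZMod 2, Wit p (Gu u) (O.erase a) p := by
        intro u
        apply ih (I.erase i).card hlt (Gu u) (O.erase a) (I.erase i) rfl
        · -- locality of the substituted instance
          intro e heO
          obtain ⟨hEsub, hEcard, hEdef⟩ := loc_can hloc (Finset.mem_of_mem_erase heO)
          refine ⟨(ES (G e)).erase i, ?_, ?_, ?_⟩
          · intro j hj
            rw [Finset.mem_erase] at hj ⊢
            exact ⟨hj.1, hEsub hj.2⟩
          · exact le_trans (Finset.card_le_card (Finset.erase_subset i _)) hEcard
          · exact defOn_sub1 hEdef i (u + c₁)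
        · by_cases hcJ : ∃ e ∈ O.erase a, ∀ y y' : κ → ZMod 2, Gu u e y = Gu u e y'
          · exact Or.inl hcJ
          · push_neg at hcJ
            right
            constructor
            · -- degree invariant
              intro i' hi'
              rw [Finset.mem_erase] at hi'
              obtain ⟨hi'i, hi'I⟩ := hi'
              refine le_trans (hdeg i' hi'I) (Finset.card_le_card ?_)
              intro e hef
              rw [Finset.mem_filter] at hef ⊢
              obtain ⟨heO, hesse⟩ := hef
              have hea : e ≠ a := by
                intro hmm
                subst hmm
                have hmem := ess_mem_defOn hdefa hesse
                rw [Finset.mem_singleton] at hmem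
                exact hi'i hmem
              refine ⟨Finset.mem_erase.mpr ⟨hea, heO⟩, ?_⟩
              obtain ⟨_, hEcard', hEdef'⟩ := loc_can hloc heO
              rcases sub1_ess_or_const (w := u + c₁) hEdef' hEcard' hesse hi'i with h | h
              · exact h
              · obtain ⟨yy, yy', hne⟩ := hcJ e (Finset.mem_erase.mpr ⟨hea, heO⟩)
                exact absurd (h yy yy') hne
            · -- the new half-edge b
              have hbea : b ∈ O.erase a := Finset.mem_erase.mpr ⟨hba, hbO⟩
              refine ⟨b, hbea, ?_⟩
              have hdefl : DefOn (Gu u b) {l} := by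
                have h1 := defOn_sub1 (show DefOn (G b) {i, l} from hEbil ▸ hEbdef) i (u + c₁)
                have h2 : ({i, l} : Finset κ).erase i = {l} :=
                  Finset.erase_insert (fun hmm => hli (Finset.mem_singleton.mp hmm).symm)
                rwa [h2] at h1
              have hessl : Ess (Gu u b) l := by
                by_contra hne
                obtain ⟨yy, yy', hneq⟩ := hcJ b hbea
                apply hneq
                apply defOn_erase hdefl hne yy yy'
                intro j hj
                rw [Finset.erase_singleton] at hj
                exact absurd hj (Finset.notMem_empty j)
              have hESl : ES (Gu u b) = {l} := by
                apply Finset.eq_singleton_iff_unique_mem.mpr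
                refine ⟨mem_ES.mpr hessl, fun j hj => ?_⟩
                have := ess_mem_defOn hdefl (mem_ES.mp hj)
                rwa [Finset.mem_singleton] at this
              rw [hESl, Finset.card_singleton]
      obtain ⟨M0, hav0, hdet0, hnu0⟩ := hrecurse 0
      obtain ⟨M1, hav1, hdet1, hnu1⟩ := hrecurse 1
      apply assemble2 hp0 hp haO hdet0 hdet1 hnu0 hnu1
      · intro y h0 hm
        have hyi : y i = 0 + c₁ := by
          have hh := hrep y
          rw [h0] at hh
          have hz : ∀ v d : ZMod 2, 0 = v + d → v = 0 + d := by decide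
          exact hz (y i) c₁ hh
        have hvec : (fun e => G e y) = (fun e => Gu 0 e y) := by
          funext e
          show G e y = G e (Function.update y i (0 + c₁))
          rw [← hyi, Function.update_eq_self]
        rw [hvec] at hm
        exact hav0 y hm
      · intro y h1 hm
        have hyi : y i = 1 + c₁ := by
          have hh := hrep y
          rw [h1] at hh
          have hz : ∀ v d : ZMod 2, 1 = v + d → v = 1 + d := by decide
          exact hz (y i) c₁ hh
        have hvec : (fun e => G e y) = (fun e => Gu 1 e y) := by
          funext e
          show G e y = G e (Function.update y i (1 + c₁))
          rw [← hyi, Function.update_eq_self]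
        rw [hvec] at hm
        exact hav1 y hm

/-- Main lemma: every 2-local instance with more outputs than inputs has a missed
set of measure at least `p * p`. -/
lemma claim1 (hp0 : 0 < p) (hp : p ≤ 1 / 2) :
    ∀ (n : ℕ) (G : ι → (κ → ZMod 2) → ZMod 2) (O : Finset ι) (I : Finset κ),
      I.card = n → Loc G O I → I.card < O.card → Wit p G O (p * p) := by
  intro n
  induction n using Nat.strong_induction_on with
  | _ n ih =>
  intro G O I hIcard hloc hlt
  have hpp : p * p ≤ p := by nlinarith
  have hO1 : 0 < O.card := lt_of_le_of_lt (Nat.zero_le _) hlt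
  by_cases hconst : ∃ a ∈ O, ∀ y y' : κ → ZMod 2, G a y = G a y'
  · obtain ⟨a, haO, hc⟩ := hconst
    exact wit_weaken (wit_const hp0 hp haO hc) hpp
  push_neg at hconst
  by_cases hlow : ∃ i ∈ I, (O.filter fun e => Ess (G e) i).card ≤ 1
  · obtain ⟨i, hiI, hle⟩ := hlow
    have hin : 0 < I.card := Finset.card_pos.mpr ⟨i, hiI⟩
    have hlt' : (I.erase i).card < n := by
      rw [Finset.card_erase_of_mem hiI]; omega
    by_cases h0 : (O.filter fun e => Ess (G e) i).card = 0
    · -- dead input: drop it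
      have hnou : ∀ a ∈ O, ¬ Ess (G a) i := by
        intro a haO hess
        have hmm : a ∈ O.filter fun e => Ess (G e) i := Finset.mem_filter.mpr ⟨haO, hess⟩
        rw [Finset.card_eq_zero.mp h0] at hmm
        exact absurd hmm (Finset.notMem_empty a)
      apply ih (I.erase i).card hlt' G O (I.erase i) rfl
      · intro a haO
        obtain ⟨hEsub, hEcard, hEdef⟩ := loc_can hloc haO
        refine ⟨ES (G a), ?_, hEcard, hEdef⟩
        intro j hj
        rw [Finset.mem_erase]
        exact ⟨fun hji => hnou a haO (mem_ES.mp (hji ▸ hj)), hEsub hj⟩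
      · rw [Finset.card_erase_of_mem hiI]; omega
    · -- input with a single user f : drop both
      have h1 : (O.filter fun e => Ess (G e) i).card = 1 := by omega
      obtain ⟨f, hf⟩ := Finset.card_eq_one.mp h1
      have hfO : f ∈ O := (Finset.mem_filter.mp (hf ▸ Finset.mem_singleton_self f)).1
      have hnotf : ∀ a ∈ O.erase f, ¬ Ess (G a) i := by
        intro a ha hess
        rw [Finset.mem_erase] at ha
        have hmm : a ∈ O.filter fun e => Ess (G e) i := Finset.mem_filter.mpr ⟨ha.2, hess⟩
        rw [hf, Finset.mem_singleton] at hmm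
        exact ha.1 hmm
      have hrec : Wit p G (O.erase f) (p * p) := by
        apply ih (I.erase i).card hlt' G (O.erase f) (I.erase i) rfl
        · intro a haOf
          obtain ⟨hEsub, hEcard, hEdef⟩ := loc_can hloc (Finset.mem_of_mem_erase haOf)
          refine ⟨ES (G a), ?_, hEcard, hEdef⟩
          intro j hj
          rw [Finset.mem_erase]
          exact ⟨fun hji => hnotf a haOf (mem_ES.mp (hji ▸ hj)), hEsub hj⟩
        · rw [Finset.card_erase_of_mem hiI, Finset.card_erase_of_mem hfO]
          omega
      exact wit_mono_O hrec (Finset.erase_subset f O)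
  push_neg at hlow
  have hlow2 : ∀ i ∈ I, 2 ≤ (O.filter fun e => Ess (G e) i).card := by
    intro i hi
    have := hlow i hi
    omega
  by_cases hhalf : ∃ a ∈ O, (ES (G a)).card = 1
  · exact wit_weaken (claimH hp0 hp n G O I hIcard hloc (Or.inr ⟨hlow2, hhalf⟩)) hpp
  push_neg at hhalf
  -- every output is 2-essential
  have hES2 : ∀ a ∈ O, (ES (G a)).card = 2 := by
    intro a haO
    obtain ⟨_, hEcard, hEdef⟩ := loc_can hloc haO
    have hc0 : (ES (G a)).card ≠ 0 := by
      intro hz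
      obtain ⟨y, y', hne⟩ := hconst a haO
      exact hne (const_of_defOn_empty ((Finset.card_eq_zero.mp hz) ▸ hEdef) y y')
    have hc1 : (ES (G a)).card ≠ 1 := hhalf a haO
    omega
  obtain ⟨a, haO⟩ := Finset.card_pos.mp hO1
  obtain ⟨hEsub, hEcard, hEdef⟩ := loc_can hloc haO
  obtain ⟨i, j, hij, hEpair⟩ := Finset.card_eq_two.mp (hES2 a haO)
  have hdefij : DefOn (G a) {i, j} := hEpair ▸ hEdef
  have hiI : i ∈ I := hEsub (hEpair ▸ Finset.mem_insert_self i {j})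
  have hjI : j ∈ I := hEsub (hEpair ▸ Finset.mem_insert_of_mem (Finset.mem_singleton_self j))
  have hessi : Ess (G a) i := mem_ES.mp (hEpair ▸ Finset.mem_insert_self i {j})
  have hessj : Ess (G a) j :=
    mem_ES.mp (hEpair ▸ Finset.mem_insert_of_mem (Finset.mem_singleton_self j))
  have hrepr : ∀ y, G a y = h2 (G a) i j (y i) (y j) := h2_rep hij hdefij
  have hin : 0 < I.card := Finset.card_pos.mpr ⟨j, hjI⟩
  rcases classify2 (h2 (G a) i j) (h2_essFst hij hdefij hessi) (h2_essSnd hij hdefij hessj)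
    with hxor | hand
  · -- XOR output: eliminate variable j by branching on the value of output a
    set Gu : ZMod 2 → ι → (κ → ZMod 2) → ZMod 2 :=
      fun u e => fun y => G e (Function.update y j (y i + h2 (G a) i j 0 0 + u)) with hGu
    have hltj : (I.erase j).card < n := by rw [Finset.card_erase_of_mem hjI]; omega
    have hrecurse : ∀ u : ZMod 2, Wit p (Gu u) (O.erase a) (p * p) := by
      intro u
      apply ih (I.erase j).card hltj (Gu u) (O.erase a) (I.erase j) rfl
      · -- locality
        intro e heO
        obtain ⟨hEsub', hEcard', hEdef'⟩ := loc_can hloc (Finset.mem_of_mem_erase heO)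
        by_cases hjE : j ∈ ES (G e)
        · refine ⟨((ES (G e)).erase j) ∪ {i}, ?_, ?_, ?_⟩
          · intro l hl
            rw [Finset.mem_union, Finset.mem_singleton] at hl
            rw [Finset.mem_erase]
            rcases hl with h | h
            · rw [Finset.mem_erase] at h
              exact ⟨h.1, hEsub' h.2⟩
            · exact ⟨h ▸ hij, h ▸ hiI⟩
          · refine le_trans (Finset.card_union_le _ _) ?_
            rw [Finset.card_singleton, Finset.card_erase_of_mem hjE]
            omega
          · intro y y' hagree
            apply hEdef'
            intro l hl
            by_cases hlj : l = j
            · subst hlj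
              rw [Function.update_self, Function.update_self,
                hagree i (Finset.mem_union_right _ (Finset.mem_singleton_self i))]
            · rw [Function.update_of_ne hlj, Function.update_of_ne hlj]
              exact hagree l (Finset.mem_union_left _ (Finset.mem_erase.mpr ⟨hlj, hl⟩))
        · refine ⟨ES (G e), ?_, hEcard', ?_⟩
          · intro l hl
            rw [Finset.mem_erase]
            exact ⟨fun hlj => hjE (by rw [← hlj]; exact hl), hEsub' hl⟩
          · refine defOn_congr (fun y => ?_) hEdef'
            apply hEdef'
            intro l hl
            have hlj : l ≠ j := fun hlj => hjE (by rw [← hlj]; exact hl)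
            exact (Function.update_of_ne hlj _ y).symm
      · rw [Finset.card_erase_of_mem hjI, Finset.card_erase_of_mem haO]
        omega
    obtain ⟨M0, hav0, hdet0, hnu0⟩ := hrecurse 0
    obtain ⟨M1, hav1, hdet1, hnu1⟩ := hrecurse 1
    have hzz : ∀ vi vj d u : ZMod 2, vi + vj + d = u → vj = vi + d + u := by decide
    apply assemble2 hp0 hp haO hdet0 hdet1 hnu0 hnu1
    · intro y h0 hm
      have hyj : y j = y i + h2 (G a) i j 0 0 + 0 := by
        apply hzz
        rw [← hxor (y i) (y j), ← hrepr y]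
        exact h0
      have hvec : (fun e => G e y) = (fun e => Gu 0 e y) := by
        funext e
        show G e y = G e (Function.update y j (y i + h2 (G a) i j 0 0 + 0))
        rw [← hyj, Function.update_eq_self]
      rw [hvec] at hm
      exact hav0 y hm
    · intro y h1 hm
      have hyj : y j = y i + h2 (G a) i j 0 0 + 1 := by
        apply hzz
        rw [← hxor (y i) (y j), ← hrepr y]
        exact h1
      have hvec : (fun e => G e y) = (fun e => Gu 1 e y) := by
        funext e
        show G e y = G e (Function.update y j (y i + h2 (G a) i j 0 0 + 1))
        rw [← hyj, Function.update_eq_self]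
      rw [hvec] at hm
      exact hav1 y hm
  · -- AND output: force it and appeal to the chase lemma
    obtain ⟨w₁, w₂, vs, hiff⟩ := hand
    set GJ : ι → (κ → ZMod 2) → ZMod 2 :=
      fun e => fun y => G e (Function.update (Function.update y i w₁) j w₂) with hGJ
    have hGJsub : ∀ e, ∀ y, GJ e y = sub1 (sub1 (G e) j w₂) i w₁ y := fun e y => rfl
    have hclaimH : Wit p GJ (O.erase a) p := by
      apply claimH hp0 hp ((I.erase i).erase j).card GJ (O.erase a) ((I.erase i).erase j) rfl
      · -- locality
        intro e heO
        obtain ⟨hEsub', hEcard', hEdef'⟩ := loc_can hloc (Finset.mem_of_mem_erase heO)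
        refine ⟨((ES (G e)).erase j).erase i, ?_, ?_, ?_⟩
        · intro l hl
          rw [Finset.mem_erase] at hl
          obtain ⟨hli, hl⟩ := hl
          rw [Finset.mem_erase] at hl
          obtain ⟨hlj, hl⟩ := hl
          rw [Finset.mem_erase]
          exact ⟨hlj, Finset.mem_erase.mpr ⟨hli, hEsub' hl⟩⟩
        · refine le_trans (Finset.card_le_card (Finset.erase_subset _ _)) ?_
          exact le_trans (Finset.card_le_card (Finset.erase_subset _ _)) hEcard'
        · exact defOn_sub1 (defOn_sub1 hEdef' j w₂) i w₁
      · by_cases hcJ : ∃ e ∈ O.erase a, ∀ y y' : κ → ZMod 2, GJ e y = GJ e y'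
        · exact Or.inl hcJ
        · push_neg at hcJ
          right
          constructor
          · -- degrees
            intro i' hi'
            rw [Finset.mem_erase] at hi'
            obtain ⟨hi'j, hi'⟩ := hi'
            rw [Finset.mem_erase] at hi'
            obtain ⟨hi'i, hi'I⟩ := hi'
            refine le_trans (hlow2 i' hi'I) (Finset.card_le_card ?_)
            intro e hef
            rw [Finset.mem_filter] at hef ⊢
            obtain ⟨heO, hesse⟩ := hef
            have hea : e ≠ a := by
              intro hmm; subst hmm
              have hmem := ess_mem_defOn hdefij hesse
              rw [Finset.mem_insert, Finset.mem_singleton] at hmem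
              rcases hmem with h | h
              exacts [hi'i h, hi'j h]
            refine ⟨Finset.mem_erase.mpr ⟨hea, heO⟩, ?_⟩
            obtain ⟨_, hEcard'', hEdef''⟩ := loc_can hloc heO
            rcases sub1_ess_or_const (w := w₂) hEdef'' hEcard'' hesse hi'j with h | hcon
            · rcases sub1_ess_or_const (w := w₁) (defOn_sub1 hEdef'' j w₂)
                (le_trans (Finset.card_le_card (Finset.erase_subset _ _)) hEcard'') h hi'i
                with h2 | hcon
              · exact h2
              · obtain ⟨yy, yy', hne⟩ := hcJ e (Finset.mem_erase.mpr ⟨hea, heO⟩)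
                exact absurd (hcon yy yy') hne
            · obtain ⟨yy, yy', hne⟩ := hcJ e (Finset.mem_erase.mpr ⟨hea, heO⟩)
              exact absurd (sub1_const hcon yy yy') hne
          · -- a new half-edge among the other users of i
            have hi2 : 2 ≤ (O.filter fun e => Ess (G e) i).card := hlow2 i hiI
            have hgt : 1 < (O.filter fun e => Ess (G e) i).card := by omega
            obtain ⟨b, hbf, hba⟩ := Finset.exists_mem_ne hgt a
            rw [Finset.mem_filter] at hbf
            obtain ⟨hbO, hessbi⟩ := hbf
            have hbea : b ∈ O.erase a := Finset.mem_erase.mpr ⟨hba, hbO⟩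
            obtain ⟨hEbsub, hEbcard, hEbdef⟩ := loc_can hloc hbO
            have hiEb : i ∈ ES (G b) := mem_ES.mpr hessbi
            obtain ⟨u1, u2, hu12, hEbpair⟩ := Finset.card_eq_two.mp (hES2 b hbO)
            have hil : ∃ l, l ≠ i ∧ ES (G b) = {i, l} := by
              rw [hEbpair] at hiEb
              simp only [Finset.mem_insert, Finset.mem_singleton] at hiEb
              rcases hiEb with h | h
              · exact ⟨u2, fun hmm => hu12 (h ▸ hmm.symm), by rw [hEbpair, h]⟩
              · exact ⟨u1, fun hmm => hu12 (hmm.trans h), by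
                  rw [hEbpair, h, Finset.pair_comm]⟩
            obtain ⟨l, hli, hEbil⟩ := hil
            by_cases hlj : l = j
            · -- ES (G b) = {i, j} : then GJ b is constant, contradiction
              exfalso
              have hdef0 : DefOn (GJ b) (∅ : Finset κ) := by
                have hstep1 : DefOn (sub1 (G b) j w₂) (({i, l} : Finset κ).erase j) :=
                  defOn_sub1 (show DefOn (G b) {i, l} from hEbil ▸ hEbdef) j w₂
                have hset1 : ({i, l} : Finset κ).erase j = {i} := by
                  rw [← hlj, Finset.pair_comm, Finset.erase_insert
                    (fun hmm => hli (Finset.mem_singleton.mp hmm))]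
                rw [hset1] at hstep1
                have hstep2 := defOn_sub1 hstep1 i w₁
                rw [Finset.erase_singleton] at hstep2
                exact hstep2
              obtain ⟨yy, yy', hne⟩ := hcJ b hbea
              exact hne (const_of_defOn_empty hdef0 yy yy')
            · -- ES (G b) = {i, l} with l ∉ {i, j} : GJ b is a half-edge on l
              refine ⟨b, hbea, ?_⟩
              have hjEb : j ∉ ({i, l} : Finset κ) := by
                simp only [Finset.mem_insert, Finset.mem_singleton]
                push_neg
                exact ⟨Ne.symm hij, fun hmm => hlj hmm.symm⟩
              have hdefl : DefOn (GJ b) {l} := by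
                have hstep1 : DefOn (sub1 (G b) j w₂) ({i, l} : Finset κ) := by
                  have := defOn_sub1 (show DefOn (G b) {i, l} from hEbil ▸ hEbdef) j w₂
                  rwa [Finset.erase_eq_of_notMem hjEb] at this
                have hstep2 := defOn_sub1 hstep1 i w₁
                rwa [Finset.erase_insert
                  (fun hmm => hli (Finset.mem_singleton.mp hmm).symm)] at hstep2
              have hessl : Ess (GJ b) l := by
                by_contra hne
                obtain ⟨yy, yy', hneq⟩ := hcJ b hbea
                apply hneq
                apply defOn_erase hdefl hne yy yy'
                intro m hm
                rw [Finset.erase_singleton] at hm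
                exact absurd hm (Finset.notMem_empty m)
              have hESl : ES (GJ b) = {l} := by
                apply Finset.eq_singleton_iff_unique_mem.mpr
                refine ⟨mem_ES.mpr hessl, fun m hm => ?_⟩
                have := ess_mem_defOn hdefl (mem_ES.mp hm)
                rwa [Finset.mem_singleton] at this
              rw [hESl, Finset.card_singleton]
    obtain ⟨MJ, havJ, hdetJ, hnuJ⟩ := hclaimH
    apply assemble1 hp0 hp haO (le_of_lt hp0) hdetJ hnuJ
    intro y hv hm
    have hij2 : y i = w₁ ∧ y j = w₂ := by
      apply (hiff (y i) (y j)).mp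
      rw [← hrepr y]
      exact hv
    have hvec : (fun e => G e y) = (fun e => GJ e y) := by
      funext e
      show G e y = G e (Function.update (Function.update y i w₁) j w₂)
      rw [← hij2.1, ← hij2.2, Function.update_eq_self i y, Function.update_eq_self j y]
    rw [hvec] at hm
    exact havJ y hm

end Main

end S11




theorem stmt11 {k : ℕ} (p : ℝ) (hp0 : 0 < p) (hp : p ≤ 1 / 2)
    (f : (Fin (k + 1) → ZMod 2) → (Fin k → ZMod 2))
    (g : (Fin k → ZMod 2) → (Fin (k + 1) → ZMod 2)) (hg : IsLocal g 2) :
    pmeas p {x | g (f x) = x} ≤ 1 - p ^ 2 := by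
  classical
  set G : Fin (k + 1) → (Fin k → ZMod 2) → ZMod 2 := fun a y => g y a with hG
  have hloc : S11.Loc G Finset.univ Finset.univ := by
    intro a _
    obtain ⟨N, hN, hdep⟩ := hg a
    exact ⟨N, Finset.subset_univ N, hN, fun y y' hagree => hdep y y' hagree⟩
  have hlt : (Finset.univ : Finset (Fin k)).card < (Finset.univ : Finset (Fin (k + 1))).card := by
    rw [Finset.card_univ, Finset.card_univ, Fintype.card_fin, Fintype.card_fin]
    omega
  obtain ⟨M, havoid, hdet, hnu⟩ := S11.claim1 hp0 hp (Finset.univ : Finset (Fin k)).card G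
    Finset.univ Finset.univ rfl hloc hlt
  have hpm : ∀ x : Fin (k + 1) → ZMod 2, pmass p x = ∏ a, S11.wgt p (x a) := by
    intro x
    unfold pmass
    rw [← Finset.prod_filter_mul_prod_filter_not Finset.univ (fun i => x i ≠ 0)
      (fun i => S11.wgt p (x i))]
    have h1 : ∀ i ∈ Finset.univ.filter (fun i : Fin (k + 1) => x i ≠ 0),
        S11.wgt p (x i) = p := by
      intro i hi
      rw [Finset.mem_filter] at hi
      have hd : ∀ v : ZMod 2, v ≠ 0 → v = 1 := by decide
      rw [hd _ hi.2, S11.wgt_one]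
    have h2 : ∀ i ∈ Finset.univ.filter (fun i : Fin (k + 1) => ¬ x i ≠ 0),
        S11.wgt p (x i) = 1 - p := by
      intro i hi
      rw [Finset.mem_filter] at hi
      rw [not_not.mp hi.2, S11.wgt_zero]
    rw [Finset.prod_congr rfl h1, Finset.prod_congr rfl h2, Finset.prod_const,
      Finset.prod_const]
    have h3 : (Finset.univ.filter (fun i : Fin (k + 1) => ¬ x i ≠ 0)).card
        = (k + 1) - (Finset.univ.filter (fun i : Fin (k + 1) => x i ≠ 0)).card := by
      have h4 := Finset.card_filter_add_card_filter_not
        (s := (Finset.univ : Finset (Fin (k + 1)))) (p := fun i => x i ≠ 0)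
      rw [Finset.card_univ, Fintype.card_fin] at h4
      omega
    rw [h3]
    rfl
  have hpe : pmeas p {x | g (f x) = x} = S11.nu p {x | g (f x) = x} := by
    unfold pmeas S11.nu
    apply Finset.sum_congr rfl
    intro x _
    by_cases hx : x ∈ {x | g (f x) = x}
    · rw [if_pos hx, if_pos hx, hpm]
    · rw [if_neg hx, if_neg hx]
  have hdisj : {x | g (f x) = x} ∩ M = ∅ := by
    apply Set.eq_empty_iff_forall_notMem.mpr
    rintro x ⟨hxS, hxM⟩
    apply havoid (f x)
    have hfx : g (f x) = x := hxS
    have hveq : (fun a => G a (f x)) = x := by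
      funext a
      show g (f x) a = x a
      rw [hfx]
    rw [hveq]
    exact hxM
  have h1 : S11.nu p {x | g (f x) = x} + S11.nu p M ≤ 1 := by
    rw [← S11.nu_union_disjoint hdisj]
    calc S11.nu p ({x | g (f x) = x} ∪ M) ≤ S11.nu p Set.univ :=
        S11.nu_mono hp0 hp (Set.subset_univ _)
    _ = 1 := S11.nu_univ
  rw [hpe, show p ^ 2 = p * p from sq p]
  linarith [hnu]
end
end
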